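/- The function A(x,t) = e^{i·t²/10} · e^{(1+i)x - arctan(t)} / (1 + (1/4)·e^{2x - 2·arctan(t)}) satisfies i·A_t + (1/(2(1+t²)))·A_xx + (t/5)·A + (1/(1+t²))·|A|²·A = 0 for all (x,t) ∈ ℝ². -/

import Mathlib

set_option maxHeartbeats 2000000 in
/-- The one-soliton solution of the vcNLS equation with fractional coefficients
`α(t) = 1/(2(1+t²))`, `β(t) = t/5`, `γ(t) = 1/(1+t²)`. -/
theorem vcNLS_soliton_fractional_coefficients :
    let A : ℝ → ℝ → ℂ := fun x t =>
      Complex.exp (Complex.I * (t : ℂ) ^ 2 / 10) *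
        Complex.exp ((1 + Complex.I) * (x : ℂ) - (Real.arctan t : ℂ)) /
        (1 + (1 / 4) * Complex.exp (2 * (x : ℂ) - 2 * (Real.arctan t : ℂ)))
    ∀ x t : ℝ,
      Complex.I * deriv (fun τ => A x τ) t
        + ((1 / (2 * (1 + t ^ 2)) : ℝ) : ℂ) * deriv (deriv (fun y => A y t)) x
        + ((t / 5 : ℝ) : ℂ) * A x t
        + ((1 / (1 + t ^ 2) : ℝ) : ℂ) * (‖A x t‖ : ℂ) ^ 2 * A x t = 0 := by
  intro A x t
  simp only [A]
  have hDr : ∀ y : ℝ, (1 : ℂ) + (1/4) * Complex.exp (2*(y:ℂ) - 2*(Real.arctan t:ℂ))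
      = ((1 + (1/4)*Real.exp (2*y - 2*Real.arctan t) : ℝ) : ℂ) := by
    intro y
    rw [show (2*(y:ℂ) - 2*(Real.arctan t:ℂ)) = ((2*y - 2*Real.arctan t : ℝ):ℂ) by
      push_cast; ring, ← Complex.ofReal_exp]
    push_cast; ring
  have hD0 : ∀ y : ℝ, (1 : ℂ) + (1/4) * Complex.exp (2*(y:ℂ) - 2*(Real.arctan t:ℂ)) ≠ 0 := by
    intro y
    rw [hDr y]
    exact Complex.ofReal_ne_zero.mpr (by positivity)
  -- spatial derivatives over ℂ
  have hNz : ∀ z : ℂ, HasDerivAt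
      (fun z => Complex.exp (Complex.I * (t:ℂ)^2/10) * Complex.exp ((1+Complex.I)*z - (Real.arctan t:ℂ)))
      (Complex.exp (Complex.I * (t:ℂ)^2/10) * Complex.exp ((1+Complex.I)*z - (Real.arctan t:ℂ)) * (1+Complex.I)) z := by
    intro z
    have h1 : HasDerivAt (fun z : ℂ => (1+Complex.I)*z - (Real.arctan t:ℂ)) (1+Complex.I) z := by
      simpa using ((hasDerivAt_id z).const_mul (1+Complex.I)).sub_const (Real.arctan t:ℂ)
    simpa [mul_assoc] using h1.cexp.const_mul (Complex.exp (Complex.I * (t:ℂ)^2/10))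
  have hDz : ∀ z : ℂ, HasDerivAt
      (fun z => (1:ℂ) + (1/4) * Complex.exp (2*z - 2*(Real.arctan t:ℂ)))
      ((1/4) * (Complex.exp (2*z - 2*(Real.arctan t:ℂ)) * 2)) z := by
    intro z
    have h1 : HasDerivAt (fun z : ℂ => 2*z - 2*(Real.arctan t:ℂ)) 2 z := by
      simpa using ((hasDerivAt_id z).const_mul (2:ℂ)).sub_const (2*(Real.arctan t:ℂ))
    simpa using (h1.cexp.const_mul ((1:ℂ)/4)).const_add 1
  -- first spatial derivative
  have hA1 : ∀ y : ℝ, HasDerivAt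
      (fun y : ℝ => Complex.exp (Complex.I * (t:ℂ)^2/10) * Complex.exp ((1+Complex.I)*(y:ℂ) - (Real.arctan t:ℂ))
        / (1 + (1/4) * Complex.exp (2*(y:ℂ) - 2*(Real.arctan t:ℂ))))
      ((Complex.exp (Complex.I * (t:ℂ)^2/10) * Complex.exp ((1+Complex.I)*(y:ℂ) - (Real.arctan t:ℂ)) * (1+Complex.I)
          * ((1:ℂ) + (1/4) * Complex.exp (2*(y:ℂ) - 2*(Real.arctan t:ℂ)))
        - Complex.exp (Complex.I * (t:ℂ)^2/10) * Complex.exp ((1+Complex.I)*(y:ℂ) - (Real.arctan t:ℂ))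
          * ((1/4) * (Complex.exp (2*(y:ℂ) - 2*(Real.arctan t:ℂ)) * 2)))
        / ((1:ℂ) + (1/4) * Complex.exp (2*(y:ℂ) - 2*(Real.arctan t:ℂ)))^2) y := by
    intro y
    exact ((hNz (y:ℂ)).div (hDz (y:ℂ)) (hD0 y)).comp_ofReal
  have hd1 : (deriv fun y : ℝ => Complex.exp (Complex.I * (t:ℂ)^2/10) * Complex.exp ((1+Complex.I)*(y:ℂ) - (Real.arctan t:ℂ))
        / (1 + (1/4) * Complex.exp (2*(y:ℂ) - 2*(Real.arctan t:ℂ)))) = fun y : ℝ =>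
      (Complex.exp (Complex.I * (t:ℂ)^2/10) * Complex.exp ((1+Complex.I)*(y:ℂ) - (Real.arctan t:ℂ)) * (1+Complex.I)
          * ((1:ℂ) + (1/4) * Complex.exp (2*(y:ℂ) - 2*(Real.arctan t:ℂ)))
        - Complex.exp (Complex.I * (t:ℂ)^2/10) * Complex.exp ((1+Complex.I)*(y:ℂ) - (Real.arctan t:ℂ))
          * ((1/4) * (Complex.exp (2*(y:ℂ) - 2*(Real.arctan t:ℂ)) * 2)))
        / ((1:ℂ) + (1/4) * Complex.exp (2*(y:ℂ) - 2*(Real.arctan t:ℂ)))^2 :=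
    funext fun y => (hA1 y).deriv
  -- second spatial derivative
  have hMz : HasDerivAt (fun z : ℂ =>
      Complex.exp (Complex.I * (t:ℂ)^2/10) * Complex.exp ((1+Complex.I)*z - (Real.arctan t:ℂ)) * (1+Complex.I)
          * ((1:ℂ) + (1/4) * Complex.exp (2*z - 2*(Real.arctan t:ℂ)))
        - Complex.exp (Complex.I * (t:ℂ)^2/10) * Complex.exp ((1+Complex.I)*z - (Real.arctan t:ℂ))
          * ((1/4) * (Complex.exp (2*z - 2*(Real.arctan t:ℂ)) * 2)))
      ((Complex.exp (Complex.I * (t:ℂ)^2/10) * Complex.exp ((1+Complex.I)*(x:ℂ) - (Real.arctan t:ℂ)) * (1+Complex.I) * (1+Complex.I)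
          * ((1:ℂ) + (1/4) * Complex.exp (2*(x:ℂ) - 2*(Real.arctan t:ℂ)))
        + Complex.exp (Complex.I * (t:ℂ)^2/10) * Complex.exp ((1+Complex.I)*(x:ℂ) - (Real.arctan t:ℂ)) * (1+Complex.I)
          * ((1/4) * (Complex.exp (2*(x:ℂ) - 2*(Real.arctan t:ℂ)) * 2)))
        - (Complex.exp (Complex.I * (t:ℂ)^2/10) * Complex.exp ((1+Complex.I)*(x:ℂ) - (Real.arctan t:ℂ)) * (1+Complex.I)
          * ((1/4) * (Complex.exp (2*(x:ℂ) - 2*(Real.arctan t:ℂ)) * 2))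
        + Complex.exp (Complex.I * (t:ℂ)^2/10) * Complex.exp ((1+Complex.I)*(x:ℂ) - (Real.arctan t:ℂ))
          * ((1/4) * (Complex.exp (2*(x:ℂ) - 2*(Real.arctan t:ℂ)) * 2 * 2)))) (x:ℂ) := by
    have h1 := (hNz (x:ℂ)).mul_const (1+Complex.I)
    have hin : HasDerivAt (fun z : ℂ => 2*z - 2*(Real.arctan t:ℂ)) 2 (x:ℂ) := by
      simpa using ((hasDerivAt_id (x:ℂ)).const_mul (2:ℂ)).sub_const (2*(Real.arctan t:ℂ))
    have h2 := (hin.cexp.mul_const (2:ℂ)).const_mul ((1:ℂ)/4)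
    exact (h1.mul (hDz (x:ℂ))).sub ((hNz (x:ℂ)).mul h2)
  have hDsq : HasDerivAt (fun z : ℂ => ((1:ℂ) + (1/4) * Complex.exp (2*z - 2*(Real.arctan t:ℂ)))^2)
      ((2:ℕ) * ((1:ℂ) + (1/4) * Complex.exp (2*(x:ℂ) - 2*(Real.arctan t:ℂ)))^(2-1)
        * ((1/4) * (Complex.exp (2*(x:ℂ) - 2*(Real.arctan t:ℂ)) * 2))) (x:ℂ) :=
    (hDz (x:ℂ)).pow 2
  have hDsq0 : ((1:ℂ) + (1/4) * Complex.exp (2*(x:ℂ) - 2*(Real.arctan t:ℂ)))^2 ≠ 0 :=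
    pow_ne_zero 2 (hD0 x)
  have hA2 := (hMz.div hDsq hDsq0).comp_ofReal
  simp only [Pi.div_def] at hA2
  -- time derivative
  have harc : HasDerivAt (fun τ : ℝ => (Real.arctan τ : ℂ)) ((1/(1+t^2) : ℝ) : ℂ) t :=
    (Real.hasDerivAt_arctan t).ofReal_comp
  have hph : HasDerivAt (fun τ : ℝ => Complex.exp (Complex.I * (τ:ℂ)^2/10))
      (Complex.exp (Complex.I * (t:ℂ)^2/10) * (Complex.I * ((2:ℕ) * (t:ℂ)^(2-1)) / 10)) t :=
    ((((hasDerivAt_pow 2 ((t:ℂ))).comp_ofReal).const_mul Complex.I).div_const 10).cexp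
  have hnum2 : HasDerivAt (fun τ : ℝ => Complex.exp ((1+Complex.I)*(x:ℂ) - (Real.arctan τ:ℂ)))
      (Complex.exp ((1+Complex.I)*(x:ℂ) - (Real.arctan t:ℂ)) * (-((1/(1+t^2) : ℝ) : ℂ))) t :=
    (harc.const_sub ((1+Complex.I)*(x:ℂ))).cexp
  have hden2 : HasDerivAt (fun τ : ℝ => (1:ℂ) + (1/4) * Complex.exp (2*(x:ℂ) - 2*(Real.arctan τ:ℂ)))
      ((1/4) * (Complex.exp (2*(x:ℂ) - 2*(Real.arctan t:ℂ)) * (-(2 * ((1/(1+t^2) : ℝ) : ℂ))))) t := by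
    have hin : HasDerivAt (fun τ : ℝ => 2*(x:ℂ) - 2*(Real.arctan τ:ℂ))
        (-(2 * ((1/(1+t^2) : ℝ) : ℂ))) t := by
      simpa using (harc.const_mul (2:ℂ)).const_sub (2*(x:ℂ))
    exact (hin.cexp.const_mul ((1:ℂ)/4)).const_add 1
  have hT := (hph.mul hnum2).div hden2 (hD0 x)
  simp only [Pi.mul_def, Pi.div_def] at hT
  -- norm of A
  have hphase : Complex.exp (Complex.I * (t:ℂ)^2/10) * Complex.exp ((1+Complex.I)*(x:ℂ) - (Real.arctan t:ℂ))
      = Complex.exp (((t^2/10 + x : ℝ) : ℂ) * Complex.I) * ((Real.exp (x - Real.arctan t) : ℝ) : ℂ) := by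
    rw [Complex.ofReal_exp, ← Complex.exp_add, ← Complex.exp_add]
    congr 1
    push_cast; ring
  have hnorm : ‖Complex.exp (Complex.I * (t:ℂ)^2/10) * Complex.exp ((1+Complex.I)*(x:ℂ) - (Real.arctan t:ℂ))
      / (1 + (1/4) * Complex.exp (2*(x:ℂ) - 2*(Real.arctan t:ℂ)))‖
      = Real.exp (x - Real.arctan t) / (1 + (1/4)*Real.exp (2*x - 2*Real.arctan t)) := by
    rw [hphase, hDr x, norm_div, norm_mul,
      Complex.norm_exp_ofReal_mul_I, Complex.norm_real, Real.norm_eq_abs, Complex.norm_real, Real.norm_eq_abs,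
      abs_of_pos (Real.exp_pos _), abs_of_pos (by positivity), one_mul]
  -- rewrite derivatives in the goal
  rw [hT.deriv, hd1, hA2.deriv, hnorm]
  -- reduce all exponentials to canonical atoms
  have h2 : Complex.exp ((1+Complex.I)*(x:ℂ) - (Real.arctan t:ℂ))
      = Complex.exp (Complex.I * (x:ℂ)) * ((Real.exp (x - Real.arctan t) : ℝ) : ℂ) := by
    rw [Complex.ofReal_exp, ← Complex.exp_add]
    congr 1
    push_cast; ring
  have h3 : Complex.exp (2*(x:ℂ) - 2*(Real.arctan t:ℂ))
      = ((Real.exp (x - Real.arctan t) : ℝ) : ℂ)^2 := by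
    rw [show (2*(x:ℂ) - 2*(Real.arctan t:ℂ)) = ((x - Real.arctan t : ℝ):ℂ) + ((x - Real.arctan t : ℝ):ℂ) by
      push_cast; ring, Complex.exp_add, ← Complex.ofReal_exp]
    ring
  rw [h2, h3]
  have hre : Real.exp (2*x - 2*Real.arctan t) = Real.exp (x - Real.arctan t)^2 := by
    rw [← Real.exp_nat_mul]; ring_nf
  have hRd : (1:ℂ) + 1/4 * ((Real.exp (x - Real.arctan t) : ℝ) : ℂ)^2 ≠ 0 := by
    rw [show (1:ℂ) + 1/4 * ((Real.exp (x - Real.arctan t) : ℝ) : ℂ)^2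
        = ((1 + 1/4 * (Real.exp (x - Real.arctan t))^2 : ℝ) : ℂ) by push_cast; ring]
    exact Complex.ofReal_ne_zero.mpr (by positivity)
  have ht1c : (1:ℂ) + (t:ℂ)^2 ≠ 0 := by
    rw [show (1:ℂ) + (t:ℂ)^2 = ((1 + t^2 : ℝ) : ℂ) by push_cast; ring]
    exact Complex.ofReal_ne_zero.mpr (by positivity)
  have hns : ((Real.exp (x - Real.arctan t) / (1 + 1/4*Real.exp (2*x - 2*Real.arctan t)) : ℝ) : ℂ)
      = ((Real.exp (x - Real.arctan t) : ℝ) : ℂ)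
        / (1 + 1/4 * ((Real.exp (x - Real.arctan t) : ℝ) : ℂ)^2) := by
    rw [hre]; push_cast; ring
  rw [hns,
    show ((1/(2*(1+t^2)) : ℝ) : ℂ) = 1/(2*(1+(t:ℂ)^2)) by push_cast; ring,
    show ((t/5 : ℝ) : ℂ) = (t:ℂ)/5 by push_cast; ring,
    show ((1/(1+t^2) : ℝ) : ℂ) = 1/(1+(t:ℂ)^2) by push_cast; ring]
  generalize hR : ((Real.exp (x - Real.arctan t) : ℝ) : ℂ) = R at hRd ⊢
  generalize hQ : Complex.exp (Complex.I * (t:ℂ)^2/10) = Q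
  generalize hJ : Complex.exp (Complex.I * (x:ℂ)) = J
  have hD : ((1 + 1 / 4 * R ^ 2) ^ 4 * ((1 + (t:ℂ) ^ 2) * 10)) ≠ 0 :=
    mul_ne_zero (pow_ne_zero _ hRd) (mul_ne_zero ht1c (by norm_num))
  have heq : (1:ℂ)/(2*(1+(t:ℂ)^2)) = (1/(1+(t:ℂ)^2))/2 := by
    rw [div_div]; ring_nf
  rw [heq]
  have he1 : ((1:ℂ)/(1+(t:ℂ)^2)) * (1+(t:ℂ)^2) = 1 := div_mul_cancel₀ 1 ht1c
  generalize hge : (1:ℂ)/(1+(t:ℂ)^2) = e at he1 ⊢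
  have E1 : Complex.I * (((Q * (Complex.I * (((2:ℕ):ℂ) * (t:ℂ) ^ (2 - 1)) / 10) * (J * R) + Q * (J * R * -e)) * (1 + 1 / 4 * R ^ 2) - Q * (J * R) * (1 / 4 * (R ^ 2 * -(2 * e)))) / (1 + 1 / 4 * R ^ 2) ^ 2)
      = Complex.I * ((Q * (Complex.I * (((2:ℕ):ℂ) * (t:ℂ) ^ (2 - 1)) / 10) * (J * R) + Q * (J * R * -e)) * (1 + 1 / 4 * R ^ 2) - Q * (J * R) * (1 / 4 * (R ^ 2 * -(2 * e)))) * ((1 + 1 / 4 * R ^ 2) ^ 2 * ((1 + (t:ℂ) ^ 2) * 10)) / ((1 + 1 / 4 * R ^ 2) ^ 4 * ((1 + (t:ℂ) ^ 2) * 10)) := by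
    rw [eq_div_iff hD, ← mul_div_assoc, div_mul_eq_mul_div, div_eq_iff (pow_ne_zero 2 hRd)]
    ring
  have E2 : e / 2 * (((Q * (J * R) * (1 + Complex.I) * (1 + Complex.I) * (1 + 1 / 4 * R ^ 2) + Q * (J * R) * (1 + Complex.I) * (1 / 4 * (R ^ 2 * 2)) - (Q * (J * R) * (1 + Complex.I) * (1 / 4 * (R ^ 2 * 2)) + Q * (J * R) * (1 / 4 * (R ^ 2 * 2 * 2)))) * (1 + 1 / 4 * R ^ 2) ^ 2 - (Q * (J * R) * (1 + Complex.I) * (1 + 1 / 4 * R ^ 2) - Q * (J * R) * (1 / 4 * (R ^ 2 * 2))) * (((2:ℕ):ℂ) * (1 + 1 / 4 * R ^ 2) ^ (2 - 1) * (1 / 4 * (R ^ 2 * 2)))) / ((1 + 1 / 4 * R ^ 2) ^ 2) ^ 2)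
      = e / 2 * ((Q * (J * R) * (1 + Complex.I) * (1 + Complex.I) * (1 + 1 / 4 * R ^ 2) + Q * (J * R) * (1 + Complex.I) * (1 / 4 * (R ^ 2 * 2)) - (Q * (J * R) * (1 + Complex.I) * (1 / 4 * (R ^ 2 * 2)) + Q * (J * R) * (1 / 4 * (R ^ 2 * 2 * 2)))) * (1 + 1 / 4 * R ^ 2) ^ 2 - (Q * (J * R) * (1 + Complex.I) * (1 + 1 / 4 * R ^ 2) - Q * (J * R) * (1 / 4 * (R ^ 2 * 2))) * (((2:ℕ):ℂ) * (1 + 1 / 4 * R ^ 2) ^ (2 - 1) * (1 / 4 * (R ^ 2 * 2)))) * ((1 + (t:ℂ) ^ 2) * 10) / ((1 + 1 / 4 * R ^ 2) ^ 4 * ((1 + (t:ℂ) ^ 2) * 10)) := by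
    rw [eq_div_iff hD, ← mul_div_assoc, div_mul_eq_mul_div, div_eq_iff (pow_ne_zero 2 (pow_ne_zero 2 hRd))]
    ring
  have E3 : (t:ℂ) / 5 * (Q * (J * R) / (1 + 1 / 4 * R ^ 2))
      = (t:ℂ) / 5 * (Q * (J * R)) * ((1 + 1 / 4 * R ^ 2) ^ 3 * ((1 + (t:ℂ) ^ 2) * 10)) / ((1 + 1 / 4 * R ^ 2) ^ 4 * ((1 + (t:ℂ) ^ 2) * 10)) := by
    rw [eq_div_iff hD, ← mul_div_assoc, div_mul_eq_mul_div, div_eq_iff hRd]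
    ring
  have E4 : e * (R / (1 + 1 / 4 * R ^ 2)) ^ 2 * (Q * (J * R) / (1 + 1 / 4 * R ^ 2))
      = e * R ^ 2 * (Q * (J * R)) * ((1 + 1 / 4 * R ^ 2) * ((1 + (t:ℂ) ^ 2) * 10)) / ((1 + 1 / 4 * R ^ 2) ^ 4 * ((1 + (t:ℂ) ^ 2) * 10)) := by
    rw [div_pow, eq_div_iff hD, ← mul_div_assoc, ← mul_div_assoc, div_mul_eq_mul_div,
      div_mul_eq_mul_div, div_mul_eq_mul_div, div_div,
      div_eq_iff (mul_ne_zero (pow_ne_zero 2 hRd) hRd)]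
    ring
  rw [E1, E2, E3, E4, ← add_div, ← add_div, ← add_div, div_eq_zero_iff]
  left
  linear_combination ((5:ℂ)*R*Q*J*e + ((15:ℂ)/4)*R^3*Q*J*e + ((15:ℂ)/16)*R^5*Q*J*e + ((5:ℂ)/64)*R^7*Q*J*e + (2:ℂ)*(t:ℂ)*R*Q*J + ((3:ℂ)/2)*(t:ℂ)*R^3*Q*J + ((3:ℂ)/8)*(t:ℂ)*R^5*Q*J + ((1:ℂ)/32)*(t:ℂ)*R^7*Q*J + (5:ℂ)*(t:ℂ)^2*R*Q*J*e + ((15:ℂ)/4)*(t:ℂ)^2*R^3*Q*J*e + ((15:ℂ)/16)*(t:ℂ)^2*R^5*Q*J*e + ((5:ℂ)/64)*(t:ℂ)^2*R^7*Q*J*e + (2:ℂ)*(t:ℂ)^3*R*Q*J + ((3:ℂ)/2)*(t:ℂ)^3*R^3*Q*J + ((3:ℂ)/8)*(t:ℂ)^3*R^5*Q*J + ((1:ℂ)/32)*(t:ℂ)^3*R^7*Q*J) * Complex.I_sq
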